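/- arXiv:1310.5013 — 3 statements merged into one kernel-verified Lean document; each statement's English description precedes it below -/
import Mathlib

section
/- For any integers r, s ≥ 0 and any real (or complex) x ≠ 1, the identity ∑_{k=0}^{r} C(r+s-k, s) (x/(x-1))^k = x^{r+s+1}/(x-1)^r + (1-x) ∑_{k=0}^{s} C(r+s-k, r) x^k holds, where C(n,k) denotes the binomial coefficient. -/
lemma aux2 (r s : ℕ) (x : ℂ) :
    (x - 1) * ∑ k ∈ Finset.range (s + 1), ((r + s + 1 - k).choose (r + 1) : ℂ) * x ^ k =
      x * ∑ k ∈ Finset.range (s + 1), ((r + s - k).choose r : ℂ) * x ^ k -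
        ((r + s + 1).choose (r + 1) : ℂ) := by
  induction s with
  | zero => simp [Nat.choose_self]
  | succ s ih =>
    have hpascal : ∀ k ∈ Finset.range (s + 2),
        (((r + (s + 1) + 1 - k).choose (r + 1) : ℂ) * x ^ k) =
          ((r + s + 1 - k).choose (r + 1) : ℂ) * x ^ k +
            ((r + s + 1 - k).choose r : ℂ) * x ^ k := by
      intro k hk
      have hk' : k ≤ s + 1 := by simpa [Nat.lt_succ_iff] using hk
      have h1 : r + (s + 1) + 1 - k = (r + s + 1 - k) + 1 := by omega
      rw [h1, Nat.choose_succ_succ]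
      push_cast
      ring
    rw [Finset.sum_congr rfl hpascal, Finset.sum_add_distrib]
    -- first sum: last term vanishes
    have h2 : ∑ k ∈ Finset.range (s + 2), ((r + s + 1 - k).choose (r + 1) : ℂ) * x ^ k =
        ∑ k ∈ Finset.range (s + 1), ((r + s + 1 - k).choose (r + 1) : ℂ) * x ^ k := by
      rw [Finset.sum_range_succ]
      have : r + s + 1 - (s + 1) = r := by omega
      rw [this, Nat.choose_succ_self]
      simp
    -- second sum: shift
    have h3 : ∑ k ∈ Finset.range (s + 2), ((r + s + 1 - k).choose r : ℂ) * x ^ k =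
        x * ∑ k ∈ Finset.range (s + 1), ((r + s - k).choose r : ℂ) * x ^ k +
          ((r + s + 1).choose r : ℂ) := by
      rw [Finset.sum_range_succ', Finset.mul_sum]
      congr 1
      · apply Finset.sum_congr rfl
        intro k hk
        have : r + s + 1 - (k + 1) = r + s - k := by omega
        rw [this]
        ring
      · simp
    have h4 : ∑ k ∈ Finset.range (s + 2), ((r + (s + 1) - k).choose r : ℂ) * x ^ k =
        ∑ k ∈ Finset.range (s + 2), ((r + s + 1 - k).choose r : ℂ) * x ^ k := by
      apply Finset.sum_congr rfl
      intro k hk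
      have : r + (s + 1) - k = r + s + 1 - k := by omega
      rw [this]
    have h5 : ((r + (s + 1) + 1).choose (r + 1) : ℂ) =
        ((r + s + 1).choose (r + 1) : ℂ) + ((r + s + 1).choose r : ℂ) := by
      have : r + (s + 1) + 1 = (r + s + 1) + 1 := by omega
      rw [this, Nat.choose_succ_succ]
      push_cast
      ring
    rw [h2, h4, h3, h5]
    linear_combination ih + (x - 1) * h3.symm - (x - 1) * h3.symm

lemma aux1 (r s : ℕ) (x : ℂ) :
    ∑ k ∈ Finset.range (r + 1), ((r + s - k).choose s : ℂ) * x ^ k * (x - 1) ^ (r - k) =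
      x ^ (r + s + 1) -
        (x - 1) ^ (r + 1) * ∑ k ∈ Finset.range (s + 1), ((r + s - k).choose r : ℂ) * x ^ k := by
  induction r with
  | zero =>
    simp only [Nat.zero_add, Finset.sum_range_one, Nat.sub_zero, Nat.choose_self, pow_zero]
    have hgeo : (∑ k ∈ Finset.range (s + 1), ((s - k).choose 0 : ℂ) * x ^ k) * (x - 1) =
        x ^ (s + 1) - 1 := by
      simp only [Nat.choose_zero_right, Nat.cast_one, one_mul]
      exact geom_sum_mul x (s + 1)
    push_cast
    linear_combination hgeo
  | succ r ih =>
    have hshift : ∑ k ∈ Finset.range (r + 2),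
        ((r + 1 + s - k).choose s : ℂ) * x ^ k * (x - 1) ^ (r + 1 - k) =
        x * (∑ k ∈ Finset.range (r + 1),
          ((r + s - k).choose s : ℂ) * x ^ k * (x - 1) ^ (r - k)) +
          ((r + s + 1).choose s : ℂ) * (x - 1) ^ (r + 1) := by
      rw [Finset.sum_range_succ', Finset.mul_sum]
      congr 1
      · apply Finset.sum_congr rfl
        intro k hk
        have e1 : r + 1 + s - (k + 1) = r + s - k := by omega
        have e2 : r + 1 - (k + 1) = r - k := by omega
        rw [e1, e2]
        ring
      · have : r + 1 + s - 0 = r + s + 1 := by omega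
        rw [this]
        simp
    rw [hshift, ih]
    have hsymm : ((r + s + 1).choose s : ℂ) = ((r + s + 1).choose (r + 1) : ℂ) := by
      congr 1
      rw [← Nat.choose_symm (by omega : r + 1 ≤ r + s + 1)]
      congr 1
      omega
    have h2 := aux2 r s x
    have h6 : ∑ k ∈ Finset.range (s + 1), ((r + 1 + s - k).choose (r + 1) : ℂ) * x ^ k =
        ∑ k ∈ Finset.range (s + 1), ((r + s + 1 - k).choose (r + 1) : ℂ) * x ^ k := by
      apply Finset.sum_congr rfl
      intro k hk
      have : r + 1 + s - k = r + s + 1 - k := by omega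
      rw [this]
    rw [hsymm, h6]
    linear_combination (x - 1) ^ (r + 1) * h2

theorem stmt_0 (r s : ℕ) (x : ℂ) (hx : x ≠ 1) :
    ∑ k ∈ Finset.range (r + 1), ((r + s - k).choose s : ℂ) * (x / (x - 1)) ^ k =
      x ^ (r + s + 1) / (x - 1) ^ r +
        (1 - x) * ∑ k ∈ Finset.range (s + 1), ((r + s - k).choose r : ℂ) * x ^ k := by
  have h1 : x - 1 ≠ 0 := sub_ne_zero.mpr hx
  have hpow : (x - 1) ^ r ≠ 0 := pow_ne_zero _ h1
  apply mul_right_cancel₀ hpow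
  rw [Finset.sum_mul]
  have hterm : ∀ k ∈ Finset.range (r + 1),
      ((r + s - k).choose s : ℂ) * (x / (x - 1)) ^ k * (x - 1) ^ r =
        ((r + s - k).choose s : ℂ) * x ^ k * (x - 1) ^ (r - k) := by
    intro k hk
    have hk' : k ≤ r := by simpa [Nat.lt_succ_iff] using hk
    have hr : (x - 1) ^ r = (x - 1) ^ k * (x - 1) ^ (r - k) := by
      rw [← pow_add]; congr 1; omega
    rw [hr, div_pow]
    field_simp
  rw [Finset.sum_congr rfl hterm, aux1 r s x]
  field_simp
  ring
end

section
/- Let q be a complex number with |q| < 1 and let c ≠ 0. For any integers r, s ≥ 0, the identity ∑_{k=0}^{r} [r+s-k choose r-k]_q q^{(s+1)k} (c;q)_k = (1/c; q^{-1})_{1+s} (c q^{1+s}; q)_r + c^{-1} ∑_{k=0}^{s} [r+s-k choose s-k]_q (1/c; q^{-1})_k q^{-k} holds. -/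
open Finset Complex

/-- finite q-Pochhammer symbol `(x; q)_n` -/
noncomputable def qp (q x : ℂ) (n : ℕ) : ℂ := ∏ j ∈ Finset.range n, (1 - x * q ^ j)

/-- infinite q-Pochhammer symbol `(x; q)_∞` -/
noncomputable def qpi (q x : ℂ) : ℂ := ∏' j : ℕ, (1 - x * q ^ j)

/-- finite q-Pochhammer symbol with base `q⁻¹`: `(x; q⁻¹)_n` -/
noncomputable def qpinv (q x : ℂ) (n : ℕ) : ℂ := ∏ j ∈ Finset.range n, (1 - x * q⁻¹ ^ j)

/-- Gaussian (q-binomial) coefficient -/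
noncomputable def qbinom (q : ℂ) (n k : ℕ) : ℂ := qp q q n / (qp q q k * qp q q (n - k))

lemma qp_succ (q x : ℂ) (n : ℕ) : qp q x (n+1) = qp q x n * (1 - x * q^n) :=
  Finset.prod_range_succ _ n

lemma qpinv_succ (q x : ℂ) (n : ℕ) : qpinv q x (n+1) = qpinv q x n * (1 - x * (q⁻¹)^n) :=
  Finset.prod_range_succ _ n

lemma qp_shift (q x : ℂ) (n : ℕ) : qp q x (n+1) = (1 - x) * qp q (x*q) n := by
  unfold qp
  rw [Finset.prod_range_succ']
  rw [mul_comm]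
  congr 1
  · simp
  · exact Finset.prod_congr rfl fun j _ => by rw [pow_succ']; ring

lemma qpinv_shift (q x : ℂ) (n : ℕ) : qpinv q x (n+1) = (1 - x) * qpinv q (x*q⁻¹) n := by
  unfold qpinv
  rw [Finset.prod_range_succ']
  rw [mul_comm]
  congr 1
  · simp
  · exact Finset.prod_congr rfl fun j _ => by rw [pow_succ']; ring

lemma qpq_ne (q : ℂ) (hq : ‖q‖ < 1) (n : ℕ) : qp q q n ≠ 0 := by
  unfold qp
  refine Finset.prod_ne_zero_iff.2 fun j _ => sub_ne_zero.2 fun h => ?_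
  have h1 : ‖q * q ^ j‖ < 1 := by
    rw [norm_mul, norm_pow]
    calc ‖q‖ * ‖q‖ ^ j ≤ ‖q‖ * 1 := by
          exact mul_le_mul_of_nonneg_left (pow_le_one₀ (norm_nonneg _) hq.le) (norm_nonneg _)
      _ < 1 := by simpa using hq
  rw [← h] at h1
  simp at h1

lemma qbinom_zero (q : ℂ) (hq : ‖q‖ < 1) (n : ℕ) : qbinom q n 0 = 1 := by
  unfold qbinom
  rw [Nat.sub_zero, show qp q q 0 = 1 by simp [qp], one_mul]
  exact div_self (qpq_ne q hq n)

lemma qbinom_self (q : ℂ) (hq : ‖q‖ < 1) (n : ℕ) : qbinom q n n = 1 := by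
  unfold qbinom
  rw [Nat.sub_self, show qp q q 0 = 1 by simp [qp], mul_one]
  exact div_self (qpq_ne q hq n)

lemma qbinom_symm (q : ℂ) (a b : ℕ) : qbinom q (a+b) a = qbinom q (a+b) b := by
  unfold qbinom
  rw [show a+b-a = b by omega, show a+b-b = a by omega, mul_comm]

lemma pascal (q : ℂ) (hq : ‖q‖ < 1) (m t : ℕ) :
    qbinom q (m+t+2) (m+1) = qbinom q (m+t+1) (m+1) + q^(t+1) * qbinom q (m+t+1) m := by
  unfold qbinom
  rw [show m+t+2-(m+1) = t+1 by omega, show m+t+1-(m+1) = t by omega,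
      show m+t+1-m = t+1 by omega,
      show m+t+2 = (m+t+1)+1 by omega, qp_succ, qp_succ q q t, qp_succ q q m]
  have h1 := qpq_ne q hq (m+t+1)
  have h2 := qpq_ne q hq m
  have h3 := qpq_ne q hq t
  have h4 : (1 : ℂ) - q * q^t ≠ 0 := by
    have := qpq_ne q hq (t+1); rw [qp_succ] at this
    exact right_ne_zero_of_mul this
  have h5 : (1 : ℂ) - q * q^m ≠ 0 := by
    have := qpq_ne q hq (m+1); rw [qp_succ] at this
    exact right_ne_zero_of_mul this
  field_simp
  ring

noncomputable def Lsum (q c : ℂ) (r s : ℕ) : ℂ :=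
  ∑ k ∈ Finset.range (r + 1), qbinom q (r + s - k) (r - k) * q ^ ((s + 1) * k) * qp q c k

noncomputable def Msum (q c : ℂ) (r s : ℕ) : ℂ :=
  ∑ k ∈ Finset.range (s + 1), qbinom q (r + s - k) (s - k) * qpinv q c⁻¹ k * (q⁻¹) ^ k

lemma telescope (q x : ℂ) (n : ℕ) :
    qpinv q x n + x * ∑ k ∈ Finset.range n, qpinv q x k * (q⁻¹)^k = 1 := by
  induction n with
  | zero => simp [qpinv]
  | succ n ih =>
    rw [Finset.sum_range_succ, qpinv_succ]
    linear_combination ih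

lemma Lrec (q c : ℂ) (r s : ℕ) :
    Lsum q c (r+1) s = qbinom q (r+1+s) (r+1) + (1-c) * q^(s+1) * Lsum q (c*q) r s := by
  unfold Lsum
  rw [Finset.sum_range_succ']
  have h : ∀ k ∈ Finset.range (r+1),
      qbinom q (r+1+s-(k+1)) (r+1-(k+1)) * q ^ ((s+1)*(k+1)) * qp q c (k+1)
      = (1-c) * q^(s+1) * (qbinom q (r+s-k) (r-k) * q ^ ((s+1)*k) * qp q (c*q) k) := by
    intro k _
    rw [qp_shift, show r+1+s-(k+1) = r+s-k by omega, show r+1-(k+1) = r-k by omega,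
        show (s+1)*(k+1) = (s+1)*k + (s+1) by ring, pow_add]
    ring
  rw [Finset.sum_congr rfl h, ← Finset.mul_sum]
  simp only [Nat.sub_zero, mul_zero, pow_zero, mul_one, qp]
  rw [Finset.prod_range_zero]
  ring

lemma Mrec (q c : ℂ) (r s : ℕ) :
    Msum q c r (s+1) = qbinom q (r+s+1) (s+1) + (1-c⁻¹) * q⁻¹ * Msum q (c*q) r s := by
  unfold Msum
  rw [Finset.sum_range_succ']
  have h : ∀ k ∈ Finset.range (s+1),
      qbinom q (r+(s+1)-(k+1)) (s+1-(k+1)) * qpinv q c⁻¹ (k+1) * (q⁻¹) ^ (k+1)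
      = (1-c⁻¹) * q⁻¹ * (qbinom q (r+s-k) (s-k) * qpinv q (c*q)⁻¹ k * (q⁻¹) ^ k) := by
    intro k _
    rw [qpinv_shift, show r+(s+1)-(k+1) = r+s-k by omega, show s+1-(k+1) = s-k by omega,
        pow_succ, mul_inv]
    ring
  rw [Finset.sum_congr rfl h, ← Finset.mul_sum]
  simp only [Nat.sub_zero, pow_zero, mul_one, qpinv]
  rw [Finset.prod_range_zero]
  rw [show r+(s+1) = r+s+1 by omega]
  ring

lemma P1 (q c : ℂ) (hq0 : q ≠ 0) (hc : c ≠ 0) (n : ℕ) :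
    (1-c) * q^n * qpinv q (c*q)⁻¹ n = (1 - c*q^n) * qpinv q c⁻¹ n := by
  induction n with
  | zero => simp [qpinv]
  | succ n ih =>
    rw [qpinv_succ, qpinv_succ]
    have key : q*(1 - c⁻¹*q⁻¹*(q⁻¹)^n)*(1-c*q^n) = (1-c*q^(n+1))*(1-c⁻¹*(q⁻¹)^n) := by
      have hqn : q^n ≠ 0 := pow_ne_zero n hq0
      simp only [inv_pow]
      field_simp
      ring
    rw [pow_succ]
    linear_combination (q * (1 - (c*q)⁻¹*(q⁻¹)^n)) * ih + (qpinv q c⁻¹ n) * key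

lemma Nlemma (q : ℂ) (hq : ‖q‖ < 1) (hq0 : q ≠ 0) (r : ℕ) :
    ∀ s : ℕ, ∀ c : ℂ, c ≠ 0 →
      Msum q c (r+1) s = c * qbinom q (r+1+s) (r+1) + (1-c) * q^s * Msum q (c*q) r s := by
  intro s
  induction s with
  | zero =>
    intro c hc
    unfold Msum
    rw [show (0:ℕ)+1 = 1 from rfl, Finset.sum_range_one, Finset.sum_range_one]
    rw [show qpinv q c⁻¹ 0 = 1 by simp [qpinv], show qpinv q (c*q)⁻¹ 0 = 1 by simp [qpinv]]
    rw [show r+1+0-0 = r+1 by omega, show r+0-0 = r by omega, show (0:ℕ)-0 = 0 from rfl]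
    rw [qbinom_zero q hq, qbinom_zero q hq, qbinom_self q hq]
    ring
  | succ s ih =>
    intro c hc
    rw [Mrec, Mrec, ih (c*q) (mul_ne_zero hc hq0)]
    have hp := pascal q hq r s
    rw [show r+1+(s+1) = r+s+2 by omega, show r+1+s = r+s+1 by omega,
        show qbinom q (r+s+2) (s+1) = qbinom q (r+s+2) (r+1) from by
          rw [show r+s+2 = (s+1)+(r+1) by omega]; exact qbinom_symm q (s+1) (r+1),
        show qbinom q (r+s+1) (s+1) = qbinom q (r+s+1) r from by
          rw [show r+s+1 = (s+1)+r by omega]; exact qbinom_symm q (s+1) r,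
        hp]
    field_simp
    ring

lemma main_ne (q : ℂ) (hq : ‖q‖ < 1) (hq0 : q ≠ 0) (s : ℕ) :
    ∀ r : ℕ, ∀ c : ℂ, c ≠ 0 →
      Lsum q c r s = qpinv q c⁻¹ (1+s) * qp q (c * q^(1+s)) r + c⁻¹ * Msum q c r s := by
  intro r
  induction r with
  | zero =>
    intro c hc
    unfold Lsum
    rw [show (0:ℕ)+1 = 1 from rfl, Finset.sum_range_one]
    rw [show (0:ℕ)+s-0 = s by omega, show (0:ℕ)-0 = 0 from rfl, mul_zero, pow_zero,
        show qp q c 0 = 1 by simp [qp], show qp q (c*q^(1+s)) 0 = 1 by simp [qp],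
        qbinom_zero q hq, mul_one]
    have ht := telescope q c⁻¹ (s+1)
    have hM : Msum q c 0 s = ∑ k ∈ Finset.range (s+1), qpinv q c⁻¹ k * (q⁻¹)^k := by
      unfold Msum
      refine Finset.sum_congr rfl fun k hk => ?_
      rw [show (0:ℕ)+s-k = s-k by omega, qbinom_self q hq, one_mul]
    rw [hM, show 1+s = s+1 by omega, mul_one]
    linear_combination -ht
  | succ r ih =>
    intro c hc
    have hcq : c*q ≠ 0 := mul_ne_zero hc hq0
    have hL : Lsum q c (r+1) s = qbinom q (r+1+s) (r+1) + (1-c) * q^(s+1) * Lsum q (c*q) r s :=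
      Lrec q c r s
    rw [hL, ih (c*q) hcq, Nlemma q hq hq0 r s c hc]
    have e1 : (c*q)*q^(1+s) = (c*q^(1+s))*q := by ring
    rw [e1, show qp q (c*q^(1+s)) (r+1) = (1 - c*q^(1+s)) * qp q ((c*q^(1+s))*q) r from
      qp_shift q _ r]
    have hp1 := P1 q c hq0 hc (1+s)
    rw [show (1:ℕ)+s = s+1 by omega] at hp1 ⊢
    have hqq : q * q⁻¹ = 1 := mul_inv_cancel₀ hq0
    have hcc : c * c⁻¹ = 1 := mul_inv_cancel₀ hc
    linear_combination (qp q ((c*q^(s+1))*q) r) * hp1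
      + ((c⁻¹ * q^s * Msum q (c*q) r s) * (1-c)) * hqq
      - (qbinom q (r+1+s) (r+1)) * hcc

lemma qp00 (t : ℕ) : qp 0 0 t = 1 := by simp [qp]

lemma qbinom0 (n m : ℕ) : qbinom 0 n m = 1 := by
  unfold qbinom; rw [qp00, qp00, qp00]; norm_num

lemma main_zero (c : ℂ) (r s : ℕ) :
    Lsum 0 c r s = qpinv 0 c⁻¹ (1+s) * qp 0 (c * 0^(1+s)) r + c⁻¹ * Msum 0 c r s := by
  have hL : Lsum 0 c r s = 1 := by
    unfold Lsum
    rw [Finset.sum_eq_single 0]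
    · rw [show r+s-0 = r+s by omega, show r-0 = r by omega, qbinom0, mul_zero, pow_zero,
        show qp 0 c 0 = 1 by simp [qp]]
      ring
    · intro k _ hk
      rw [zero_pow (by positivity)]
      ring
    · intro h; simp at h
  have hM : Msum 0 c r s = 1 := by
    unfold Msum
    rw [Finset.sum_eq_single 0]
    · rw [show r+s-0 = r+s by omega, show s-0 = s by omega, qbinom0, pow_zero,
        show qpinv 0 c⁻¹ 0 = 1 by simp [qpinv]]
      ring
    · intro k _ hk
      rw [inv_zero, zero_pow hk]
      ring
    · intro h; simp at h
  have hpi : qpinv 0 c⁻¹ (1+s) = 1 - c⁻¹ := by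
    unfold qpinv
    rw [show 1+s = s+1 by omega, Finset.prod_range_succ']
    rw [show (∏ j ∈ Finset.range s, (1 - c⁻¹ * (0:ℂ)⁻¹ ^ (j+1))) = 1 from
      Finset.prod_eq_one fun j _ => by rw [inv_zero, zero_pow (Nat.succ_ne_zero j)]; ring]
    simp
  have hqp : qp 0 (c * 0^(1+s)) r = 1 := by
    rw [show (0:ℂ)^(1+s) = 0 by rw [zero_pow (by omega)], mul_zero, qp00]
  rw [hL, hM, hpi, hqp]
  ring


theorem stmt_2 (q c : ℂ) (hq : ‖q‖ < 1) (hc : c ≠ 0) (r s : ℕ) :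
    ∑ k ∈ Finset.range (r + 1),
        qbinom q (r + s - k) (r - k) * q ^ ((s + 1) * k) * qp q c k =
      qpinv q c⁻¹ (1 + s) * qp q (c * q ^ (1 + s)) r +
        c⁻¹ * ∑ k ∈ Finset.range (s + 1),
          qbinom q (r + s - k) (s - k) * qpinv q c⁻¹ k * (q⁻¹) ^ k := by
  by_cases hq0 : q = 0
  · subst hq0
    exact main_zero c r s
  · exact main_ne q hq hq0 s r c hc
end

section
/- Let q with 0 < |q| < 1 and a a complex number with a ≠ −q^{m} for all integers m ≤ 0. Then ∑_{k=0}^{∞} q^{k(k-1)/2} a^k / (−a; q)_{k+1} = 1. -/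
open Finset Complex

theorem stmt_6 (q a : ℂ) (hq0 : 0 < ‖q‖) (hq : ‖q‖ < 1)
    (ha : ∀ m : ℕ, a * q ^ m ≠ -1) :
    ∑' k : ℕ, q ^ (k * (k - 1) / 2) * a ^ k / qp q (-a) (k + 1) = 1 := by
  have hqne : q ≠ 0 := by
    intro h; simp [h] at hq0
  have hfac : ∀ j : ℕ, (1 : ℂ) - (-a) * q ^ j ≠ 0 := by
    intro j h
    apply ha j
    linear_combination h
  have hqp : ∀ n : ℕ, qp q (-a) n ≠ 0 := fun n =>
    Finset.prod_ne_zero_iff.mpr (fun j _ => hfac j)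
  set f : ℕ → ℂ := fun k => q ^ (k * (k - 1) / 2) * a ^ k / qp q (-a) (k + 1) with hf
  set u : ℕ → ℂ := fun k => q ^ (k * (k - 1) / 2) * a ^ k / qp q (-a) k with hu
  have hsucc : ∀ k, qp q (-a) (k + 1) = qp q (-a) k * (1 - (-a) * q ^ k) := fun k =>
    Finset.prod_range_succ _ _
  have hexp : ∀ k : ℕ, (k + 1) * ((k + 1) - 1) / 2 = k * (k - 1) / 2 + k := by
    intro k
    rw [← Nat.choose_two_right (k + 1), ← Nat.choose_two_right k,
      Nat.choose_succ_succ, Nat.choose_one_right, Nat.add_comm]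
  have htel : ∀ k, f k = u k - u (k + 1) := by
    intro k
    simp only [hf, hu]
    have h1 := hqp k
    have h2 := hfac k
    rw [hexp k, hsucc k, pow_add,
      div_sub_div _ _ h1 (mul_ne_zero h1 h2),
      div_eq_div_iff (mul_ne_zero h1 h2) (mul_ne_zero h1 (mul_ne_zero h1 h2))]
    ring
  have hu0 : u 0 = 1 := by simp [hu, qp]
  have hpartial : ∀ n, ∑ k ∈ Finset.range n, f k = 1 - u n := by
    intro n
    rw [Finset.sum_congr rfl fun k _ => htel k, Finset.sum_range_sub' u n, hu0]
  have hqlt : ‖q‖ < 1 := hq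
  have hpow : Filter.Tendsto (fun k : ℕ => q ^ k) Filter.atTop (nhds 0) :=
    tendsto_pow_atTop_nhds_zero_of_norm_lt_one hqlt
  have hfactend : Filter.Tendsto (fun k : ℕ => (1 : ℂ) - (-a) * q ^ k) Filter.atTop (nhds 1) := by
    have : Filter.Tendsto (fun k : ℕ => (1 : ℂ) - (-a) * q ^ k) Filter.atTop
        (nhds (1 - (-a) * 0)) := (tendsto_const_nhds.sub (tendsto_const_nhds.mul hpow))
    simpa using this
  have hfu : ∀ k, u k = f k * (1 - (-a) * q ^ k) := by
    intro k
    simp only [hf, hu, hsucc k]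
    rw [eq_comm, div_mul_eq_mul_div,
      div_eq_div_iff (mul_ne_zero (hqp k) (hfac k)) (hqp k)]
    ring
  -- Summability
  have hsummable : Summable f := by
    rcases eq_or_ne a 0 with rfl | ha0
    · apply summable_of_finite_support
      apply Set.Finite.subset (Set.finite_singleton 0)
      intro k hk
      simp only [Function.mem_support, hf] at hk
      rw [Set.mem_singleton_iff]
      by_contra hk0
      exact hk (by rw [zero_pow hk0, mul_zero, zero_div])
    · have hfne : ∀ k, f k ≠ 0 := by
        intro k
        simp only [hf]
        exact div_ne_zero (mul_ne_zero (pow_ne_zero _ hqne) (pow_ne_zero _ ha0)) (hqp _)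
      have hratio : ∀ k, f (k + 1) = f k * (a * q ^ k / (1 - (-a) * q ^ (k + 1))) := by
        intro k
        simp only [hf]
        rw [hexp k, hsucc (k + 1), pow_add]
        field_simp
        ring
      apply summable_of_ratio_test_tendsto_lt_one (l := 0) one_pos
        (Filter.Eventually.of_forall hfne)
      have h1 : Filter.Tendsto (fun k : ℕ => ‖a * q ^ k / (1 - (-a) * q ^ (k + 1))‖)
          Filter.atTop (nhds 0) := by
        have hnum : Filter.Tendsto (fun k : ℕ => a * q ^ k / (1 - (-a) * q ^ (k + 1)))
            Filter.atTop (nhds 0) := by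
          have : Filter.Tendsto (fun k : ℕ => a * q ^ k / (1 - (-a) * q ^ (k + 1)))
              Filter.atTop (nhds (a * 0 / 1)) := by
            apply Filter.Tendsto.div (tendsto_const_nhds.mul hpow) _ one_ne_zero
            exact hfactend.comp (Filter.tendsto_add_atTop_nat 1)
          simpa using this
        simpa only [norm_zero] using hnum.norm
      refine h1.congr fun k => ?_
      rw [hratio k, norm_mul, mul_comm (‖f k‖),
        mul_div_cancel_right₀ _ (norm_ne_zero_iff.mpr (hfne k))]
  -- u tends to 0
  have hutend : Filter.Tendsto u Filter.atTop (nhds 0) := by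
    have hftend : Filter.Tendsto f Filter.atTop (nhds 0) := hsummable.tendsto_atTop_zero
    have := hftend.mul hfactend
    simp only [zero_mul] at this
    exact this.congr fun k => (hfu k).symm
  -- Conclude
  have hhs : HasSum f 1 := by
    rw [hsummable.hasSum_iff_tendsto_nat]
    have : Filter.Tendsto (fun n => (1 : ℂ) - u n) Filter.atTop (nhds (1 - 0)) :=
      tendsto_const_nhds.sub hutend
    simp only [sub_zero] at this
    exact this.congr fun n => (hpartial n).symm
  exact hhs.tsum_eq
end
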